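/- arXiv:1802.07397 — 6 statements merged into one kernel-verified Lean document; each statement's English description precedes it below -/
import Mathlib

section
/- Let (X, ≼₁) and (X, ≼₂) be WQOs with conjunction ≼. A subset I ⊆ X is an ideal of (X, ≼) if and only if I can be written as I = I₁ ∩ I₂ where each Iₛ is an ideal of (X, ≼ₛ) and there exists a ≼-directed set D ⊆ I with Iₛ equal to the ≼ₛ-downward closure of D for s = 1, 2. -/
/-- A quasi-order that is a well-quasi-ordering. -/
def IsWQO {X : Type*} (r : X → X → Prop) : Prop :=
  Reflexive r ∧ Transitive r ∧ ∀ f : ℕ → X, ∃ i j : ℕ, i < j ∧ r (f i) (f j)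

/-- Downward closed set with respect to `r`. -/
def DownClosed {X : Type*} (r : X → X → Prop) (S : Set X) : Prop :=
  ∀ ⦃x y : X⦄, r x y → y ∈ S → x ∈ S

/-- A set is `r`-directed: any two elements have a common upper bound in it. -/
def DirectedSet {X : Type*} (r : X → X → Prop) (S : Set X) : Prop :=
  ∀ x ∈ S, ∀ y ∈ S, ∃ z ∈ S, r x z ∧ r y z

/-- An ideal: nonempty, downward closed and directed. -/
def IsIdeal {X : Type*} (r : X → X → Prop) (I : Set X) : Prop :=
  I.Nonempty ∧ DownClosed r I ∧ DirectedSet r I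

/-- Downward closure of a set with respect to `r`. -/
def dcl {X : Type*} (r : X → X → Prop) (S : Set X) : Set X :=
  {x | ∃ y ∈ S, r x y}

theorem conjunction_ideals {X : Type*} (r₁ r₂ : X → X → Prop)
    (h₁ : IsWQO r₁) (h₂ : IsWQO r₂) (I : Set X) :
    IsIdeal (fun x y => r₁ x y ∧ r₂ x y) I ↔
      ∃ I₁ I₂ : Set X, IsIdeal r₁ I₁ ∧ IsIdeal r₂ I₂ ∧ I = I₁ ∩ I₂ ∧
        ∃ D : Set X, D ⊆ I ∧ DirectedSet (fun x y => r₁ x y ∧ r₂ x y) D ∧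
          I₁ = dcl r₁ D ∧ I₂ = dcl r₂ D := by
  obtain ⟨refl₁, trans₁, -⟩ := h₁
  obtain ⟨refl₂, trans₂, -⟩ := h₂
  constructor
  · rintro ⟨⟨a, ha⟩, hdc, hdir⟩
    refine ⟨dcl r₁ I, dcl r₂ I, ⟨⟨a, a, ha, refl₁ a⟩, ?_, ?_⟩,
      ⟨⟨a, a, ha, refl₂ a⟩, ?_, ?_⟩, ?_, I, le_refl I, hdir, rfl, rfl⟩
    · rintro x y hxy ⟨z, hz, hyz⟩; exact ⟨z, hz, trans₁ hxy hyz⟩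
    · rintro x ⟨a, haI, hxa⟩ y ⟨b, hbI, hyb⟩
      obtain ⟨z, hzI, ⟨haz, -⟩, hbz, -⟩ := hdir a haI b hbI
      exact ⟨z, ⟨z, hzI, refl₁ z⟩, trans₁ hxa haz, trans₁ hyb hbz⟩
    · rintro x y hxy ⟨z, hz, hyz⟩; exact ⟨z, hz, trans₂ hxy hyz⟩
    · rintro x ⟨a, haI, hxa⟩ y ⟨b, hbI, hyb⟩
      obtain ⟨z, hzI, ⟨-, haz⟩, -, hbz⟩ := hdir a haI b hbI
      exact ⟨z, ⟨z, hzI, refl₂ z⟩, trans₂ hxa haz, trans₂ hyb hbz⟩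
    · ext x
      constructor
      · exact fun hx => ⟨⟨x, hx, refl₁ x⟩, ⟨x, hx, refl₂ x⟩⟩
      · rintro ⟨⟨a, haI, hxa⟩, b, hbI, hxb⟩
        obtain ⟨z, hzI, ⟨haz, -⟩, -, hbz⟩ := hdir a haI b hbI
        exact hdc ⟨trans₁ hxa haz, trans₂ hxb hbz⟩ hzI
  · rintro ⟨I₁, I₂, ⟨⟨a, ha⟩, -, -⟩, -, rfl, D, hDI, hDdir, rfl, rfl⟩
    -- key: every element of I₁ ∩ I₂ is ≼-below some element of D
    have key : ∀ x ∈ dcl r₁ D ∩ dcl r₂ D, ∃ z ∈ D, r₁ x z ∧ r₂ x z := by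
      rintro x ⟨⟨c, hcD, hxc⟩, d, hdD, hxd⟩
      obtain ⟨z, hzD, ⟨hcz, -⟩, -, hdz⟩ := hDdir c hcD d hdD
      exact ⟨z, hzD, trans₁ hxc hcz, trans₂ hxd hdz⟩
    obtain ⟨c, hcD, -⟩ := ha
    refine ⟨⟨c, hDI hcD⟩, ?_, ?_⟩
    · rintro x y ⟨hxy₁, hxy₂⟩ ⟨⟨c, hcD, hyc⟩, d, hdD, hyd⟩
      exact ⟨⟨c, hcD, trans₁ hxy₁ hyc⟩, d, hdD, trans₂ hxy₂ hyd⟩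
    · intro x hx y hy
      obtain ⟨z, hzD, hxz₁, hxz₂⟩ := key x hx
      obtain ⟨w, hwD, hyw₁, hyw₂⟩ := key y hy
      obtain ⟨u, huD, ⟨hzu₁, hzu₂⟩, hwu₁, hwu₂⟩ := hDdir z hzD w hwD
      exact ⟨u, hDI huD, ⟨trans₁ hxz₁ hzu₁, trans₂ hxz₂ hzu₂⟩,
        trans₁ hyw₁ hwu₁, trans₂ hyw₂ hwu₂⟩
end

section
/- Let (X, ≼) be a WQO and I₁, …, Iₙ ideals with L ⊆ I₁ ∪ ⋯ ∪ Iₙ and Iᵢ ⊄ Iⱼ for i ≠ j. Then Iᵢ is contained in the downward closure of L if and only if Iᵢ is contained in the downward closure of L ∩ Iᵢ. -/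
/-- A finite family in a nonempty directed set has a common upper bound in it. -/
lemma directed_finite_ub {X : Type*} (r : X → X → Prop) (htr : Transitive r)
    {I : Set X} (hne : I.Nonempty) (hd : DirectedSet r I) :
    ∀ (m : ℕ) (f : Fin m → X), (∀ j, f j ∈ I) → ∃ z ∈ I, ∀ j, r (f j) z := by
  intro m
  induction m with
  | zero =>
    intro f _
    obtain ⟨z, hz⟩ := hne
    exact ⟨z, hz, fun j => j.elim0⟩
  | succ m ih =>
    intro f hf
    obtain ⟨z, hz, hzb⟩ := ih (f ∘ Fin.castSucc) (fun j => hf _)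
    obtain ⟨w, hw, hzw, hfw⟩ := hd z hz (f (Fin.last m)) (hf _)
    refine ⟨w, hw, fun j => ?_⟩
    rcases Fin.eq_castSucc_or_eq_last j with ⟨k, hk⟩ | hk
    · exact hk ▸ htr (hzb k) hzw
    · exact hk ▸ hfw

theorem inclusion_vs_adherence {X : Type*} (r : X → X → Prop) (h : IsWQO r)
    {n : ℕ} (I : Fin n → Set X) (hI : ∀ i, IsIdeal r (I i))
    (L : Set X) (hL : L ⊆ ⋃ i, I i)
    (hinc : ∀ i j, i ≠ j → ¬ I i ⊆ I j) (i : Fin n) :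
    I i ⊆ dcl r L ↔ I i ⊆ dcl r (L ∩ I i) := by
  obtain ⟨hrefl, htrans, -⟩ := h
  constructor
  · intro hsub x hx
    -- choose, for each j ≠ i, an element of I i not in I j
    have hchoice : ∀ j : Fin n, ∃ a, a ∈ I i ∧ (j ≠ i → a ∉ I j) := by
      intro j
      by_cases hj : j = i
      · exact ⟨x, hx, fun hji => absurd hj hji⟩
      · obtain ⟨a, ha, hna⟩ := Set.not_subset.mp (hinc i j (fun e => hj e.symm))
        exact ⟨a, ha, fun _ => hna⟩
    choose a ha hna using hchoice
    -- common upper bound z ∈ I i of x and all a j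
    obtain ⟨hne, hdc, hdir⟩ := hI i
    obtain ⟨z, hzI, hzb⟩ := directed_finite_ub r htrans hne hdir (n + 1)
      (Fin.cons x a) (by
        intro j
        rcases Fin.eq_zero_or_eq_succ j with rfl | ⟨k, rfl⟩
        · simpa using hx
        · simpa using ha k)
    -- z is below some y ∈ L
    obtain ⟨y, hyL, hzy⟩ := hsub hzI
    -- y lies in some I j
    obtain ⟨_, ⟨j, rfl⟩, hyj⟩ := hL hyL
    have hxz : r x z := by simpa using hzb 0
    by_cases hji : j = i
    · exact ⟨y, ⟨hyL, hji ▸ hyj⟩, htrans hxz hzy⟩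
    · exfalso
      have haz : r (a j) z := by simpa using hzb j.succ
      exact hna j hji ((hI j).2.1 (htrans haz hzy) hyj)
  · intro hsub x hx
    obtain ⟨y, ⟨hyL, _⟩, hxy⟩ := hsub hx
    exact ⟨y, hyL, hxy⟩
end

section
/- For any word v over alphabet Σ whose length is a multiple of d, the ⊑_d-downward closure of v* equals the set of words w of length divisible by d such that for every position i, every letter occurring in w at a position congruent to i modulo d also occurs in v at some position congruent to i modulo d. -/
/-- `kappa d w i` is the set of letters occurring in `w` at (1-based) positions
congruent to `i` modulo `d`. -/
def kappa {A : Type*} (d : ℕ) (w : List A) (i : ℕ) : Set A :=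
  {a | ∃ p : ℕ, w[p]? = some a ∧ (p + 1) % d = i % d}

/-- `ModEmb d u v` : `u` embeds into `v` by a strictly monotone, letter-preserving
map that preserves positions modulo `d`, and `|u| ≡ |v| (mod d)`. -/
def ModEmb {A : Type*} (d : ℕ) (u v : List A) : Prop :=
  u.length % d = v.length % d ∧
    ∃ α : Fin u.length → Fin v.length, StrictMono α ∧
      (∀ i, u.get i = v.get (α i)) ∧
      (∀ i : Fin u.length, ((α i : ℕ)) % d = ((i : ℕ)) % d)

/-- Downward closure of a set of words with respect to `ModEmb d`. -/
def dclMod {A : Type*} (d : ℕ) (S : Set (List A)) : Set (List A) :=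
  {u | ∃ v ∈ S, ModEmb d u v}

/-- The `k`-th power of a word. -/
def wpow {A : Type*} (v : List A) (k : ℕ) : List A :=
  (List.replicate k v).flatten

/-- `π_d(v)`: the smallest `t ≥ 1` dividing `d` such that
`κ_d(v)(i + t) = κ_d(v)(i)` for all `i ∈ [1, d - t]`. -/
noncomputable def piD {A : Type*} (d : ℕ) (v : List A) : ℕ :=
  sInf {t | t ∣ d ∧ 1 ≤ t ∧ ∀ i : ℕ, 1 ≤ i → i + t ≤ d →
    kappa d v (i + t) = kappa d v i}

lemma wpow_zero {A : Type*} (v : List A) : wpow v 0 = [] := rfl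

lemma wpow_succ {A : Type*} (v : List A) (k : ℕ) : wpow v (k + 1) = v ++ wpow v k := by
  simp [wpow, List.replicate_succ]

lemma wpow_length {A : Type*} (v : List A) (k : ℕ) :
    (wpow v k).length = k * v.length := by
  induction k with
  | zero => simp [wpow_zero]
  | succ n ih => rw [wpow_succ, List.length_append, ih]; ring

lemma kappa_nil {A : Type*} (d i : ℕ) : kappa d ([] : List A) i = ∅ := by
  ext a; simp [kappa]

lemma kappa_append {A : Type*} {d : ℕ} {v : List A} (hdv : d ∣ v.length) (u : List A)
    (i : ℕ) : kappa d (v ++ u) i = kappa d v i ∪ kappa d u i := by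
  obtain ⟨c, hc⟩ := hdv
  ext a
  constructor
  · rintro ⟨p, hp, hm⟩
    by_cases h : p < v.length
    · left
      exact ⟨p, by rwa [List.getElem?_append_left h] at hp, hm⟩
    · right
      push_neg at h
      refine ⟨p - v.length, by rwa [List.getElem?_append_right h] at hp, ?_⟩
      have hpe : p + 1 = (p - v.length + 1) + d * c := by omega
      rw [← hm, hpe, Nat.add_mul_mod_self_left]
  · rintro (⟨p, hp, hm⟩ | ⟨p, hp, hm⟩)
    · have hlt : p < v.length := by
        by_contra h
        push_neg at h
        rw [List.getElem?_eq_none_iff.2 h] at hp; exact nomatch hp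
      exact ⟨p, by rwa [List.getElem?_append_left hlt], hm⟩
    · refine ⟨p + v.length, ?_, ?_⟩
      · rw [List.getElem?_append_right (by omega)]
        simpa using hp
      · rw [← hm]
        have : p + v.length + 1 = (p + 1) + d * c := by omega
        rw [this, Nat.add_mul_mod_self_left]

lemma kappa_wpow_subset {A : Type*} {d : ℕ} {v : List A} (hdv : d ∣ v.length)
    (k i : ℕ) : kappa d (wpow v k) i ⊆ kappa d v i := by
  induction k with
  | zero => rw [wpow_zero, kappa_nil]; exact Set.empty_subset _
  | succ n ih =>
      rw [wpow_succ, kappa_append hdv]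
      exact Set.union_subset subset_rfl ih

lemma get?_wpow {A : Type*} (v : List A) {k m r : ℕ} (hm : m < k) (hr : r < v.length) :
    (wpow v k)[v.length * m + r]? = v[r]? := by
  induction k generalizing m with
  | zero => omega
  | succ n ih =>
      rw [wpow_succ]
      cases m with
      | zero =>
          simp only [Nat.mul_zero, Nat.zero_add]
          exact List.getElem?_append_left hr
      | succ m' =>
          have h1 : v.length * (m' + 1) + r = v.length + (v.length * m' + r) := by ring
          rw [h1, ← Nat.add_sub_cancel_left (n := v.length) (m := v.length * m' + r)] at *
          rw [List.getElem?_append_right (by omega)]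
          simpa using ih (by omega)

theorem dcl_star_charact {A : Type*} (d : ℕ) (hd : 1 ≤ d) (v : List A)
    (hv : d ∣ v.length) :
    dclMod d {w | ∃ k : ℕ, w = wpow v k} =
      {w | d ∣ w.length ∧ ∀ i ∈ Finset.Icc 1 d, kappa d w i ⊆ kappa d v i} := by
  ext w
  constructor
  · rintro ⟨u, ⟨k, rfl⟩, hlen, α, hmono, hget, hmodα⟩
    have hdu : d ∣ (wpow v k).length := by
      rw [wpow_length]; exact Dvd.dvd.mul_left hv k
    constructor
    · have h0 : (wpow v k).length % d = 0 := by obtain ⟨e, he⟩ := hdu; rw [he, Nat.mul_mod_right]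
      exact Nat.dvd_of_mod_eq_zero (hlen.trans h0)
    · intro i _ a ⟨p, hp, hm⟩
      have hplt : p < w.length := by
        by_contra h
        push_neg at h
        rw [List.getElem?_eq_none_iff.2 h] at hp; exact nomatch hp
      apply kappa_wpow_subset hv k i
      refine ⟨(α ⟨p, hplt⟩ : ℕ), ?_, ?_⟩
      · rw [List.getElem?_eq_getElem (α ⟨p, hplt⟩).2, ← List.get_eq_getElem, ← hget ⟨p, hplt⟩]
        rw [List.getElem?_eq_getElem hplt] at hp
        exact hp
      · rw [Nat.add_mod, hmodα ⟨p, hplt⟩, ← Nat.add_mod]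
        exact hm
  · rintro ⟨hwlen, hsub⟩
    rcases eq_or_ne w [] with rfl | hw
    · refine ⟨wpow v 0, ⟨0, rfl⟩, rfl, Fin.elim0, ?_, fun i => i.elim0, fun i => i.elim0⟩
      intro i; exact i.elim0
    · -- w nonempty; first show v nonempty
      have hwpos : 0 < w.length := List.length_pos_iff.2 hw
      -- for each position p of w, get a matching position in v
      have key : ∀ p : Fin w.length, ∃ q : ℕ, q < v.length ∧
          v[q]? = some (w.get p) ∧ q % d = (p : ℕ) % d := by
        intro p
        set i : ℕ := if ((p : ℕ) + 1) % d = 0 then d else ((p : ℕ) + 1) % d with hi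
        have him : i % d = ((p : ℕ) + 1) % d := by
          rcases Nat.lt_or_ge (((p : ℕ) + 1) % d) 1 with h | h
          · simp [hi, Nat.lt_one_iff.1 h, Nat.mod_self]
          · have hlt : ((p : ℕ) + 1) % d < d := Nat.mod_lt _ (by omega)
            rw [hi, if_neg (by omega), Nat.mod_eq_of_lt hlt]
        have hiIcc : i ∈ Finset.Icc 1 d := by
          have hlt : ((p : ℕ) + 1) % d < d := Nat.mod_lt _ (by omega)
          rcases Nat.lt_or_ge (((p : ℕ) + 1) % d) 1 with h | h
          · simp [hi, Nat.lt_one_iff.1 h, Finset.mem_Icc]; omega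
          · rw [hi, if_neg (by omega), Finset.mem_Icc]; omega
        have haw : w.get p ∈ kappa d w i := by
          refine ⟨(p : ℕ), ?_, by rw [him]⟩
          rw [List.getElem?_eq_getElem p.2, List.get_eq_getElem]
        obtain ⟨q, hq, hqm⟩ := hsub i hiIcc haw
        have hqlt : q < v.length := by
          by_contra h
          push_neg at h
          rw [List.getElem?_eq_none_iff.2 h] at hq; exact nomatch hq
        refine ⟨q, hqlt, hq, ?_⟩
        have h1 : (q + 1) % d = ((p : ℕ) + 1) % d := by rw [hqm, him]
        have h2 : Nat.ModEq d (q + 1) ((p : ℕ) + 1) := h1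
        exact Nat.ModEq.add_right_cancel' 1 h2
      choose q hqlt hqget hqmod using key
      have hvpos : 0 < v.length := by
        have := hqlt ⟨0, hwpos⟩; omega
      obtain ⟨c, hc⟩ := hv
      refine ⟨wpow v w.length, ⟨w.length, rfl⟩, ?_, ?_⟩
      · rw [wpow_length]
        obtain ⟨e, he⟩ := hwlen
        rw [he, hc]
        rw [Nat.mul_mod_right]
        have : d * e * (d * c) = d * (e * (d * c)) := by ring
        rw [this, Nat.mul_mod_right]
      · have hbound : ∀ p : Fin w.length,
            v.length * (p : ℕ) + q p < (wpow v w.length).length := by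
          intro p
          rw [wpow_length]
          have h1 : v.length * (p : ℕ) + q p < v.length * ((p : ℕ) + 1) :=
            by have := hqlt p; nlinarith
          have h2 : v.length * ((p : ℕ) + 1) ≤ v.length * w.length :=
            Nat.mul_le_mul_left _ (by omega)
          have := p.2; nlinarith [p.2]
        refine ⟨fun p => ⟨v.length * (p : ℕ) + q p, hbound p⟩, ?_, ?_, ?_⟩
        · intro p p' hpp
          simp only [Fin.mk_lt_mk]
          have hq1 : q p < v.length := hqlt p
          have h1 : v.length * (p : ℕ) + q p < v.length * ((p : ℕ) + 1) := by nlinarith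
          have h2 : v.length * ((p : ℕ) + 1) ≤ v.length * (p' : ℕ) :=
            Nat.mul_le_mul_left _ (by exact_mod_cast hpp)
          omega
        · intro p
          have := get?_wpow v (k := w.length) (m := (p : ℕ)) p.2 (hqlt p)
          rw [hqget p, List.getElem?_eq_getElem (hbound p)] at this
          exact (Option.some_injective _ this).symm
        · intro p
          simp only
          rw [hc]
          have : d * c * (p : ℕ) + q p = q p + d * (c * (p : ℕ)) := by ring
          rw [this, Nat.add_mul_mod_self_left]
          exact hqmod p
end

section
/- If κ_d(xyz)(i) ⊆ κ_d(v)(i) for all i ∈ {1,…,d} and the period π_d(v) divides |y|, then κ_d(xyyz)(i) ⊆ κ_d(v)(i) for all i ∈ {1,…,d}. -/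
lemma piD_mem {A : Type*} (d : ℕ) (hd : 1 ≤ d) (v : List A) :
    piD d v ∈ {t | t ∣ d ∧ 1 ≤ t ∧ ∀ i : ℕ, 1 ≤ i → i + t ≤ d →
      kappa d v (i + t) = kappa d v i} := by
  apply Nat.sInf_mem
  exact ⟨d, dvd_refl d, hd, fun i h1 h2 => by omega⟩

lemma per_steps {A : Type*} (d t : ℕ) (v : List A)
    (hper : ∀ i : ℕ, 1 ≤ i → i + t ≤ d → kappa d v (i + t) = kappa d v i) :
    ∀ k i, 1 ≤ i → i + t * k ≤ d → kappa d v (i + t * k) = kappa d v i := by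
  intro k
  induction k with
  | zero => simp
  | succ k ih =>
    intro i h1 h2
    have : i + t * (k+1) = (i + t * k) + t := by ring
    rw [this, hper (i + t*k) (by omega) (by omega), ih i h1 (by omega)]

lemma per_ext {A : Type*} (d t : ℕ) (v : List A)
    (hper : ∀ i : ℕ, 1 ≤ i → i + t ≤ d → kappa d v (i + t) = kappa d v i) :
    ∀ i j : ℕ, 1 ≤ i → i ≤ d → 1 ≤ j → j ≤ d → i % t = j % t →
      kappa d v i = kappa d v j := by
  have key : ∀ i j : ℕ, 1 ≤ i → i ≤ d → j ≤ d → i ≤ j → i % t = j % t →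
      kappa d v i = kappa d v j := by
    intro i j h1 h2 h3 hij hmod
    obtain ⟨k, hk⟩ := (Nat.modEq_iff_dvd' hij).mp hmod
    have : j = i + t * k := by omega
    rw [this, per_steps d t v hper k i h1 (by omega)]
  intro i j h1 h2 h3 h4 hmod
  rcases le_total i j with hle | hle
  · exact key i j h1 h2 h4 hle hmod
  · exact (key j i h3 h4 h2 hle hmod.symm).symm

theorem insert_periodic {A : Type*} (d : ℕ) (hd : 1 ≤ d) (x y z v : List A)
    (h : ∀ i ∈ Finset.Icc 1 d, kappa d (x ++ y ++ z) i ⊆ kappa d v i)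
    (hp : piD d v ∣ y.length) :
    ∀ i ∈ Finset.Icc 1 d, kappa d (x ++ y ++ y ++ z) i ⊆ kappa d v i := by
  intro i hi a ha
  simp only [Finset.mem_Icc] at hi
  obtain ⟨p, hget, hmod⟩ := ha
  obtain ⟨htd, ht1, hper⟩ := piD_mem d hd v
  set t := piD d v with htdef
  by_cases hcase : p < x.length + y.length
  · apply h i (by simp only [Finset.mem_Icc]; omega)
    refine ⟨p, ?_, hmod⟩
    have e1 : x ++ y ++ y ++ z = (x ++ y) ++ (y ++ z) := by
      simp [List.append_assoc]
    have e2 : x ++ y ++ z = (x ++ y) ++ z := by simp [List.append_assoc]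
    rw [e1, List.getElem?_append_left (by simp only [List.length_append]; omega)] at hget
    rw [e2, List.getElem?_append_left (by simp only [List.length_append]; omega)]
    exact hget
  · push_neg at hcase
    set q := p - y.length with hqdef
    have hq' : q + y.length = p := by omega
    have hget2 : (x ++ y ++ z)[q]? = some a := by
      have e1 : x ++ y ++ y ++ z = (x ++ y) ++ (y ++ z) := by
        simp [List.append_assoc]
      have e2 : x ++ y ++ z = x ++ (y ++ z) := by simp [List.append_assoc]
      rw [e1, List.getElem?_append_right (by simp only [List.length_append]; omega)] at hget
      rw [e2, List.getElem?_append_right (by omega)]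
      have : q - x.length = p - (x ++ y).length := by
        simp only [List.length_append]; omega
      rw [this]; exact hget
    set j := q % d + 1 with hjdef
    have hjle : j ≤ d := by have := Nat.mod_lt q (show 0 < d by omega); omega
    have hmodj : (q + 1) % d = j % d := by
      rw [hjdef, Nat.add_mod q 1, Nat.add_mod (q % d) 1, Nat.mod_mod_of_dvd _ (dvd_refl d)]
    have haj : a ∈ kappa d v j :=
      h j (by simp only [Finset.mem_Icc]; omega) ⟨q, hget2, hmodj⟩
    have hit : i % t = (p + 1) % t := by
      rw [← Nat.mod_mod_of_dvd i htd, ← hmod, Nat.mod_mod_of_dvd _ htd]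
    have hjt : j % t = (q + 1) % t := by
      rw [← Nat.mod_mod_of_dvd j htd, ← hmodj, Nat.mod_mod_of_dvd _ htd]
    have hpq : (p + 1) % t = (q + 1) % t := by
      obtain ⟨c, hc⟩ := hp
      have hpe : p + 1 = q + 1 + t * c := by omega
      rw [hpe, Nat.add_mul_mod_self_left]
    have heq : kappa d v j = kappa d v i :=
      per_ext d t v hper j i (by omega) hjle (by omega) hi.2
        (by rw [hjt, hit, hpq])
    exact heq ▸ haj
end

section
/- Let S = {≼₁, ≼₂} be two WQOs on Σ* and let ≼ be their conjunction. A language L ⊆ Σ* is a Boolean combination of upward closures of single words with respect to ≼₁ or ≼₂ if and only if L is a Boolean combination of upward closures of single words with respect to ≼. -/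
/-- Finite Boolean combinations (union, intersection, complement) of a
collection of basic sets. -/
inductive BoolComb {X : Type*} (B : Set (Set X)) : Set X → Prop
  | base {S : Set X} : S ∈ B → BoolComb B S
  | compl {S : Set X} : BoolComb B S → BoolComb B Sᶜ
  | union {S T : Set X} : BoolComb B S → BoolComb B T → BoolComb B (S ∪ T)
  | inter {S T : Set X} : BoolComb B S → BoolComb B T → BoolComb B (S ∩ T)

/-- The upward closure of a single word. -/
def upw {X : Type*} (r : X → X → Prop) (w : X) : Set X := {v | r w v}

lemma conj_isWQO {X : Type*} {r₁ r₂ : X → X → Prop} (h₁ : IsWQO r₁) (h₂ : IsWQO r₂) :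
    IsWQO (fun u v => r₁ u v ∧ r₂ u v) := by
  refine ⟨fun x => ⟨h₁.1 x, h₂.1 x⟩,
    fun a b c hab hbc => ⟨h₁.2.1 hab.1 hbc.1, h₂.2.1 hab.2 hbc.2⟩, ?_⟩
  intro f
  haveI : IsRefl X r₁ := ⟨h₁.1⟩
  haveI : IsTrans X r₁ := ⟨fun _ _ _ hab hbc => h₁.2.1 hab hbc⟩
  haveI : IsPreorder X r₁ := { refl := h₁.1, trans := fun _ _ _ hab hbc => h₁.2.1 hab hbc }
  have hp : (Set.univ : Set X).PartiallyWellOrderedOn r₁ := by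
    intro g
    obtain ⟨i, j, hij, h⟩ := h₁.2.2 (fun n => (g n).1)
    exact ⟨i, j, hij, h⟩
  obtain ⟨g, hg⟩ := hp.exists_monotone_subseq (f := f) (fun n => Set.mem_univ _)
  obtain ⟨i, j, hij, h2⟩ := h₂.2.2 (f ∘ g)
  exact ⟨g i, g j, g.strictMono hij, hg i j (le_of_lt hij), h2⟩

lemma upward_closed_finite_union {X : Type*} {r : X → X → Prop} (hr : IsWQO r)
    {U : Set X} (hU : ∀ u v, u ∈ U → r u v → v ∈ U) :
    ∃ F : Finset X, U = ⋃ x ∈ F, upw r x := by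
  by_contra hcon
  push_neg at hcon
  have key : ∀ s : Finset X, (∀ x ∈ s, x ∈ U) → ∃ y, y ∈ U ∧ ∀ x ∈ s, ¬ r x y := by
    intro s hs
    have h1 : (⋃ x ∈ s, upw r x) ⊆ U := by
      intro y hy
      simp only [Set.mem_iUnion] at hy
      obtain ⟨x, hx, hxy⟩ := hy
      exact hU x y (hs x hx) hxy
    have h2 : U ≠ ⋃ x ∈ s, upw r x := hcon s
    have hex : ∃ y ∈ U, y ∉ ⋃ x ∈ s, upw r x := by
      by_contra hc
      push_neg at hc
      exact h2 (Set.Subset.antisymm hc h1)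
    obtain ⟨y, hy, hy2⟩ := hex
    exact ⟨y, hy, fun x hx hxy => hy2 (Set.mem_biUnion hx hxy)⟩
  obtain ⟨f, hfU, hf⟩ := exists_seq_of_forall_finset_exists (fun x => x ∈ U)
    (fun x y => ¬ r x y) key
  obtain ⟨i, j, hij, h⟩ := hr.2.2 f
  exact hf i j hij h

lemma boolcomb_biUnion {X : Type*} {B : Set (Set X)} (hempty : BoolComb B ∅)
    (F : Finset X) (g : X → Set X) (hg : ∀ x ∈ F, BoolComb B (g x)) :
    BoolComb B (⋃ x ∈ F, g x) := by
  classical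
  induction F using Finset.induction_on with
  | empty => simpa using hempty
  | insert _ _ hnotmem ih =>
    rw [Finset.set_biUnion_insert]
    exact BoolComb.union (hg _ (Finset.mem_insert_self _ _))
      (ih fun x hx => hg x (Finset.mem_insert_of_mem hx))

theorem sPTL_iff_conjunction_PTL {A : Type*} (r₁ r₂ : List A → List A → Prop)
    (h₁ : IsWQO r₁) (h₂ : IsWQO r₂) (L : Set (List A)) :
    BoolComb {S | ∃ w : List A, S = upw r₁ w ∨ S = upw r₂ w} L ↔
      BoolComb {S | ∃ w : List A, S = upw (fun u v => r₁ u v ∧ r₂ u v) w} L := by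
  set r : List A → List A → Prop := fun u v => r₁ u v ∧ r₂ u v with hrdef
  have hr : IsWQO r := conj_isWQO h₁ h₂
  have hempty : BoolComb {S | ∃ w : List A, S = upw r w} (∅ : Set (List A)) := by
    rw [← Set.inter_compl_self (upw r [])]
    exact BoolComb.inter (.base ⟨[], rfl⟩) (.compl (.base ⟨[], rfl⟩))
  constructor
  · intro h
    induction h with
    | base hS =>
      obtain ⟨w, hw | hw⟩ := hS
      · subst hw
        have hup : ∀ u v, u ∈ upw r₁ w → r u v → v ∈ upw r₁ w :=
          fun u v hu huv => h₁.2.1 hu huv.1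
        obtain ⟨F, hF⟩ := upward_closed_finite_union hr hup
        rw [hF]
        exact boolcomb_biUnion hempty F _ (fun x _ => BoolComb.base ⟨x, rfl⟩)
      · subst hw
        have hup : ∀ u v, u ∈ upw r₂ w → r u v → v ∈ upw r₂ w :=
          fun u v hu huv => h₂.2.1 hu huv.2
        obtain ⟨F, hF⟩ := upward_closed_finite_union hr hup
        rw [hF]
        exact boolcomb_biUnion hempty F _ (fun x _ => BoolComb.base ⟨x, rfl⟩)
    | compl _ ih => exact .compl ih
    | union _ _ ih1 ih2 => exact .union ih1 ih2
    | inter _ _ ih1 ih2 => exact .inter ih1 ih2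
  · intro h
    induction h with
    | base hS =>
      obtain ⟨w, hw⟩ := hS
      subst hw
      have heq : upw r w = upw r₁ w ∩ upw r₂ w := rfl
      rw [heq]
      exact .inter (.base ⟨w, Or.inl rfl⟩) (.base ⟨w, Or.inr rfl⟩)
    | compl _ ih => exact .compl ih
    | union _ _ ih1 ih2 => exact .union ih1 ih2
    | inter _ _ ih1 ih2 => exact .inter ih1 ih2
end

section
/- Let (X, ≼₁), (X, ≼₂) be WQOs with conjunction ≼, let Iₛ be ≼ₛ-ideals with I = I₁ ∩ I₂, and suppose there is a ≼-directed set D₀ ⊆ I with Iₛ equal to the ≼ₛ-downward closure of D₀ for s = 1,2. Then for any L ⊆ X: there exists a ≼-directed set D ⊆ L with I equal to the ≼-downward closure of D, if and only if there exists a ≼-directed set D' ⊆ L with Iₛ equal to the ≼ₛ-downward closure of D' for s = 1,2. -/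
theorem conjunction_adherence {X : Type*} (r₁ r₂ : X → X → Prop)
    (h₁ : IsWQO r₁) (h₂ : IsWQO r₂)
    (I₁ I₂ : Set X) (hI₁ : IsIdeal r₁ I₁) (hI₂ : IsIdeal r₂ I₂)
    (I : Set X) (hI : I = I₁ ∩ I₂)
    (D₀ : Set X) (hD₀ : D₀ ⊆ I)
    (hdir₀ : DirectedSet (fun x y => r₁ x y ∧ r₂ x y) D₀)
    (h₀₁ : I₁ = dcl r₁ D₀) (h₀₂ : I₂ = dcl r₂ D₀) (L : Set X) :
    (∃ D : Set X, D ⊆ L ∧ DirectedSet (fun x y => r₁ x y ∧ r₂ x y) D ∧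
        I = dcl (fun x y => r₁ x y ∧ r₂ x y) D) ↔
      (∃ D' : Set X, D' ⊆ L ∧ DirectedSet (fun x y => r₁ x y ∧ r₂ x y) D' ∧
        I₁ = dcl r₁ D' ∧ I₂ = dcl r₂ D') := by
  obtain ⟨hr₁, ht₁, -⟩ := h₁
  obtain ⟨hr₂, ht₂, -⟩ := h₂
  obtain ⟨-, hdc₁, -⟩ := hI₁
  obtain ⟨-, hdc₂, -⟩ := hI₂
  constructor
  · rintro ⟨D, hDL, hDdir, hDI⟩
    refine ⟨D, hDL, hDdir, ?_, ?_⟩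
    · apply Set.Subset.antisymm
      · intro x hx
        rw [h₀₁] at hx
        obtain ⟨d₀, hd₀, hx₁⟩ := hx
        have : d₀ ∈ I := hD₀ hd₀
        rw [hDI] at this
        obtain ⟨d, hd, hr⟩ := this
        exact ⟨d, hd, ht₁ hx₁ hr.1⟩
      · rintro x ⟨d, hd, hx⟩
        have hdI : d ∈ I := by rw [hDI]; exact ⟨d, hd, hr₁ d, hr₂ d⟩
        rw [hI] at hdI
        exact hdc₁ hx hdI.1
    · apply Set.Subset.antisymm
      · intro x hx
        rw [h₀₂] at hx
        obtain ⟨d₀, hd₀, hx₂⟩ := hx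
        have : d₀ ∈ I := hD₀ hd₀
        rw [hDI] at this
        obtain ⟨d, hd, hr⟩ := this
        exact ⟨d, hd, ht₂ hx₂ hr.2⟩
      · rintro x ⟨d, hd, hx⟩
        have hdI : d ∈ I := by rw [hDI]; exact ⟨d, hd, hr₁ d, hr₂ d⟩
        rw [hI] at hdI
        exact hdc₂ hx hdI.2
  · rintro ⟨D', hDL, hDdir, hD1, hD2⟩
    refine ⟨D', hDL, hDdir, ?_⟩
    apply Set.Subset.antisymm
    · intro x hx
      rw [hI] at hx
      obtain ⟨hx₁, hx₂⟩ := hx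
      rw [hD1] at hx₁; rw [hD2] at hx₂
      obtain ⟨d₁, hd₁, hxd₁⟩ := hx₁
      obtain ⟨d₂, hd₂, hxd₂⟩ := hx₂
      obtain ⟨d, hd, h₁d, h₂d⟩ := hDdir d₁ hd₁ d₂ hd₂
      exact ⟨d, hd, ht₁ hxd₁ h₁d.1, ht₂ hxd₂ h₂d.2⟩
    · rintro x ⟨d, hd, hx₁, hx₂⟩
      have hd₁ : d ∈ I₁ := by rw [hD1]; exact ⟨d, hd, hr₁ d⟩
      have hd₂ : d ∈ I₂ := by rw [hD2]; exact ⟨d, hd, hr₂ d⟩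
      rw [hI]
      exact ⟨hdc₁ hx₁ hd₁, hdc₂ hx₂ hd₂⟩
end
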